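/- arXiv:1406.2396 — 4 statements merged into one kernel-verified Lean document; each statement's English description precedes it below -/
import Mathlib

section
/- Let $\mathfrak{g}$ be a finite-dimensional complex Lie algebra equipped with a real inner product $\langle\cdot,\cdot\rangle$ that is Hermitian, i.e., $\langle ix, iy\rangle = \langle x, y\rangle$ for all $x, y \in \mathfrak{g}$. With $\mathfrak{z}$ the center, $\mathfrak{v} = \mathfrak{z}^\perp$, and $J$ defined as usual, one has $J_{\alpha z}(\beta u) = \alpha \bar{\beta}\, J_z u$ for all $\alpha, \beta \in \mathbb{C}$, $z \in \mathfrak{z}$, and $u \in \mathfrak{v}$; that is, $J_z u$ is complex linear in $z$ and conjugate linear in $u$. -/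
open scoped RealInnerProductSpace

attribute [local instance high] NormedAddCommGroup.toAddCommGroup

/-- Let `G` be a finite-dimensional complex Lie algebra with a Hermitian real
inner product (`⟪i•x, i•y⟫ = ⟪x, y⟫`), `𝔷` its center, `𝔳 = 𝔷ᗮ`, and `J`
defined by `⟪J z u, v⟫ = ⟪z, ⁅u,v⁆⟫` for `v ∈ 𝔳`.  Then
`J (α•z) (β•u) = (α * β̄) • J z u`: `J z u` is complex linear in `z` and
conjugate linear in `u`. -/
theorem J_complex_linear_conjugate_linear
    {G : Type*} [LieRing G]
    [NormedAddCommGroup G] [InnerProductSpace ℝ G]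
    [Module ℂ G] [IsScalarTower ℝ ℂ G] [FiniteDimensional ℂ G]
    (hbil : ∀ (a : ℂ) (x y : G), ⁅a • x, y⁆ = a • ⁅x, y⁆)
    (hherm : ∀ x y : G, ⟪(Complex.I : ℂ) • x, (Complex.I : ℂ) • y⟫ = ⟪x, y⟫)
    (𝔷 : Submodule ℂ G) (h𝔷 : ∀ x : G, x ∈ 𝔷 ↔ ∀ y : G, ⁅x, y⁆ = 0)
    (J : G → G → G)
    (hJmem : ∀ z ∈ 𝔷, ∀ u ∈ (𝔷.restrictScalars ℝ)ᗮ, J z u ∈ (𝔷.restrictScalars ℝ)ᗮ)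
    (hJdef : ∀ z ∈ 𝔷, ∀ u ∈ (𝔷.restrictScalars ℝ)ᗮ, ∀ v ∈ (𝔷.restrictScalars ℝ)ᗮ,
      ⟪J z u, v⟫ = ⟪z, ⁅u, v⁆⟫) :
    ∀ (α β : ℂ), ∀ z ∈ 𝔷, ∀ u ∈ (𝔷.restrictScalars ℝ)ᗮ,
      J (α • z) (β • u) = (α * (starRingEnd ℂ) β) • J z u := by
  have coe_smul : ∀ (r : ℝ) (x : G), ((r : ℂ)) • x = r • x := by
    intro r x
    rw [show ((r : ℂ)) = algebraMap ℝ ℂ r from rfl, algebraMap_smul]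
  have hI : ∀ x y : G, ⟪(Complex.I : ℂ) • x, y⟫ = -⟪x, (Complex.I : ℂ) • y⟫ := by
    intro x y
    have h := hherm x ((Complex.I : ℂ) • y)
    rw [smul_smul, Complex.I_mul_I, neg_one_smul, inner_neg_right] at h
    linarith
  have hdec : ∀ (a : ℂ) (x : G), a • x = a.re • x + a.im • ((Complex.I : ℂ) • x) := by
    intro a x
    rw [← coe_smul a.re, ← coe_smul a.im, smul_smul, ← add_smul, Complex.re_add_im]
  have hadj : ∀ (a : ℂ) (x y : G), ⟪a • x, y⟫ = ⟪x, (starRingEnd ℂ a) • y⟫ := by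
    intro a x y
    rw [hdec a x, hdec (starRingEnd ℂ a) y, inner_add_left, inner_add_right,
      real_inner_smul_left, real_inner_smul_left, real_inner_smul_right,
      real_inner_smul_right, hI]
    simp [Complex.conj_re, Complex.conj_im]
  have hVsmul : ∀ (c : ℂ) (v : G), v ∈ (𝔷.restrictScalars ℝ)ᗮ →
      c • v ∈ (𝔷.restrictScalars ℝ)ᗮ := by
    intro c v hv
    rw [Submodule.mem_orthogonal']
    intro w hw
    rw [hadj]
    refine (Submodule.mem_orthogonal' _ _).mp hv _ ?_
    exact 𝔷.smul_mem _ hw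
  have hlie2 : ∀ (c : ℂ) (x y : G), ⁅x, c • y⁆ = c • ⁅x, y⁆ := by
    intro c x y
    have e1 := @lie_neg G G _ LieRing.toAddCommGroup lieRingSelfModule (c • y) x
    have e2 := @lie_neg G G _ LieRing.toAddCommGroup lieRingSelfModule y x
    rw [← lie_skew x (c • y), ← e1, hbil, e2, lie_skew]
  intro α β z hz u hu
  have hz' : α • z ∈ 𝔷 := 𝔷.smul_mem α hz
  have hu' : β • u ∈ (𝔷.restrictScalars ℝ)ᗮ := hVsmul β u hu
  have hL := hJmem _ hz' _ hu'
  have hR := hVsmul (α * starRingEnd ℂ β) _ (hJmem z hz u hu)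
  have key : ∀ v ∈ (𝔷.restrictScalars ℝ)ᗮ,
      ⟪J (α • z) (β • u) - (α * starRingEnd ℂ β) • J z u, v⟫ = 0 := by
    intro v hv
    have e1 : ⟪J (α • z) (β • u), v⟫ = ⟪z, (starRingEnd ℂ α * β) • ⁅u, v⁆⟫ := by
      rw [hJdef _ hz' _ hu' v hv, hbil, hadj, smul_smul]
    have hv' := hVsmul (starRingEnd ℂ α * β) v hv
    have e2 : ⟪(α * starRingEnd ℂ β) • J z u, v⟫
        = ⟪z, (starRingEnd ℂ α * β) • ⁅u, v⁆⟫ := by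
      rw [hadj, map_mul, Complex.conj_conj, hJdef z hz u hu _ hv', hlie2]
    rw [inner_sub_left, e1, e2, sub_self]
  have hd : J (α • z) (β • u) - (α * starRingEnd ℂ β) • J z u
      ∈ (𝔷.restrictScalars ℝ)ᗮ := Submodule.sub_mem _ hL hR
  have := key _ hd
  rw [real_inner_self_eq_norm_sq] at this
  have hnorm : ‖J (α • z) (β • u) - (α * starRingEnd ℂ β) • J z u‖ = 0 := by
    nlinarith [norm_nonneg (J (α • z) (β • u) - (α * starRingEnd ℂ β) • J z u)]
  exact sub_eq_zero.mp (norm_eq_zero.mp hnorm)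
end

section
/- Let $(\mathfrak{g}, \langle\cdot,\cdot\rangle)$ be a complex H-type Lie algebra. If $z, w \in \mathfrak{z}$ satisfy $\langle z, w\rangle = 0$ and $\langle iz, w\rangle = 0$, then $J_z J_w = J_w J_z = 0$ as maps on $\mathfrak{v}$. -/
open scoped RealInnerProductSpace

attribute [-instance] LieRing.toAddCommGroup

/-- In a complex H-type Lie algebra, if `z, w ∈ 𝔷` satisfy `⟪z, w⟫ = 0` and
`⟪i•z, w⟫ = 0`, then `J z ∘ J w = J w ∘ J z = 0` on `𝔳`. -/
theorem Jz_Jw_eq_zero_of_complex_orthogonal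
    {G : Type*} [LieRing G]
    [NormedAddCommGroup G] [InnerProductSpace ℝ G]
    [Module ℂ G] [IsScalarTower ℝ ℂ G] [FiniteDimensional ℂ G]
    (hbil : ∀ (a : ℂ) (x y : G), ⁅a • x, y⁆ = a • ⁅x, y⁆)
    (hherm : ∀ x y : G, ⟪(Complex.I : ℂ) • x, (Complex.I : ℂ) • y⟫ = ⟪x, y⟫)
    (𝔷 : Submodule ℂ G) (h𝔷 : ∀ x : G, x ∈ 𝔷 ↔ ∀ y : G, ⁅x, y⁆ = 0)
    (J : G → G → G)
    (hJmem : ∀ z ∈ 𝔷, ∀ u ∈ (𝔷.restrictScalars ℝ)ᗮ, J z u ∈ (𝔷.restrictScalars ℝ)ᗮ)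
    (hJdef : ∀ z ∈ 𝔷, ∀ u ∈ (𝔷.restrictScalars ℝ)ᗮ, ∀ v ∈ (𝔷.restrictScalars ℝ)ᗮ,
      ⟪J z u, v⟫ = ⟪z, ⁅u, v⁆⟫)
    (h1 : ∀ u ∈ (𝔷.restrictScalars ℝ)ᗮ, ∀ v ∈ (𝔷.restrictScalars ℝ)ᗮ, ⁅u, v⁆ ∈ 𝔷)
    (h2 : ∀ z ∈ 𝔷, ‖z‖ = 1 → ∀ u ∈ (𝔷.restrictScalars ℝ)ᗮ, ∀ v ∈ (𝔷.restrictScalars ℝ)ᗮ,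
      ⟪J z u, J z v⟫ = ⟪u, v⟫) :
    ∀ z ∈ 𝔷, ∀ w ∈ 𝔷, ⟪z, w⟫ = 0 → ⟪(Complex.I : ℂ) • z, w⟫ = 0 →
      ∀ u ∈ (𝔷.restrictScalars ℝ)ᗮ, J z (J w u) = 0 ∧ J w (J z u) = 0 := by
  intro z hz w hw hzw hizw u hu
  set V := (𝔷.restrictScalars ℝ)ᗮ with hVdef
  have hII : ∀ x : G, (Complex.I : ℂ) • (Complex.I : ℂ) • x = -x := by
    intro x; rw [smul_smul, Complex.I_mul_I, neg_one_smul]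
  have hIleft : ∀ a b : G, ⟪(Complex.I : ℂ) • a, b⟫ = -⟪a, (Complex.I : ℂ) • b⟫ := by
    intro a b
    calc ⟪(Complex.I : ℂ) • a, b⟫
        = ⟪(Complex.I : ℂ) • ((Complex.I : ℂ) • a), (Complex.I : ℂ) • b⟫ := (hherm _ _).symm
      _ = ⟪-a, (Complex.I : ℂ) • b⟫ := by rw [hII]
      _ = -⟪a, (Complex.I : ℂ) • b⟫ := by rw [inner_neg_left]
  have hzsmulR : ∀ (c : ℝ) {x : G}, x ∈ 𝔷 → c • x ∈ 𝔷 := by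
    intro c x hx
    have h : c • x = ((c : ℂ)) • x := by
      rw [← smul_one_smul ℂ c x, Complex.real_smul, mul_one]
    rw [h]; exact 𝔷.smul_mem _ hx
  have hiz : ∀ {x : G}, x ∈ 𝔷 → (Complex.I : ℂ) • x ∈ 𝔷 := fun hx => 𝔷.smul_mem _ hx
  have hiV : ∀ {x : G}, x ∈ V → (Complex.I : ℂ) • x ∈ V := by
    intro x hx
    rw [Submodule.mem_orthogonal] at hx ⊢
    intro y hy
    have hy' : (Complex.I : ℂ) • y ∈ 𝔷.restrictScalars ℝ := hiz hy
    calc ⟪y, (Complex.I : ℂ) • x⟫ = -⟪(Complex.I : ℂ) • y, x⟫ := by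
          rw [hIleft, neg_neg]
      _ = 0 := by rw [hx _ hy', neg_zero]
  have hext : ∀ x ∈ V, ∀ y ∈ V, (∀ v ∈ V, ⟪x, v⟫ = ⟪y, v⟫) → x = y := by
    intro x hx y hy h
    have hxy : x - y ∈ V := Submodule.sub_mem _ hx hy
    have h0 : ⟪x - y, x - y⟫ = 0 := by
      rw [inner_sub_left, h _ hxy, sub_self]
    exact sub_eq_zero.mp (inner_self_eq_zero.mp h0)
  have hlie0 : ∀ x : G, ⁅x, x⁆ = (0 : G) := by
    intro x
    have hz0 : ⁅(0 : G), (0 : G)⁆ = (0 : G) := by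
      have h := hbil 0 (0 : G) (0 : G)
      simpa using h
    have h1 := lie_self x
    have h2 := lie_self (0 : G)
    rw [hz0] at h2
    rw [h1, ← h2]
  have hJadd : ∀ z₁ ∈ 𝔷, ∀ z₂ ∈ 𝔷, ∀ u' ∈ V, J (z₁ + z₂) u' = J z₁ u' + J z₂ u' := by
    intro z₁ hz₁ z₂ hz₂ u' hu'
    refine hext _ (hJmem _ (𝔷.add_mem hz₁ hz₂) _ hu') _
      (Submodule.add_mem _ (hJmem _ hz₁ _ hu') (hJmem _ hz₂ _ hu')) ?_
    intro v hv
    rw [hJdef _ (𝔷.add_mem hz₁ hz₂) _ hu' _ hv, inner_add_left, inner_add_left,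
      hJdef _ hz₁ _ hu' _ hv, hJdef _ hz₂ _ hu' _ hv]
  have hJsmul : ∀ z₁ ∈ 𝔷, ∀ (c : ℝ), ∀ u' ∈ V, J (c • z₁) u' = c • J z₁ u' := by
    intro z₁ hz₁ c u' hu'
    refine hext _ (hJmem _ (hzsmulR c hz₁) _ hu') _
      (Submodule.smul_mem _ c (hJmem _ hz₁ _ hu')) ?_
    intro v hv
    rw [hJdef _ (hzsmulR c hz₁) _ hu' _ hv, real_inner_smul_left, real_inner_smul_left,
      hJdef _ hz₁ _ hu' _ hv]
  have hiso : ∀ z₁ ∈ 𝔷, ∀ u' ∈ V, ∀ v' ∈ V, ⟪J z₁ u', J z₁ v'⟫ = ‖z₁‖ ^ 2 * ⟪u', v'⟫ := by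
    intro z₁ hz₁ u' hu' v' hv'
    by_cases h0 : z₁ = 0
    · subst h0
      have hJ0 : ∀ x ∈ V, J 0 x = 0 := by
        intro x hx
        have h := hJsmul 0 hz₁ 0 x hx
        simpa using h
      rw [hJ0 _ hu', hJ0 _ hv']
      simp
    · set c : ℝ := ‖z₁‖ with hc
      have hcpos : c ≠ 0 := norm_ne_zero_iff.mpr h0
      set z' : G := c⁻¹ • z₁ with hz'
      have hz'mem : z' ∈ 𝔷 := hzsmulR _ hz₁
      have hz'norm : ‖z'‖ = 1 := by
        rw [hz', norm_smul, norm_inv, Real.norm_eq_abs, abs_of_pos (norm_pos_iff.mpr h0)]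
        field_simp
      have hzc : z₁ = c • z' := by
        rw [hz', smul_smul, mul_inv_cancel₀ hcpos, one_smul]
      rw [hzc, hJsmul _ hz'mem c _ hu', hJsmul _ hz'mem c _ hv',
        real_inner_smul_left, real_inner_smul_right, h2 _ hz'mem hz'norm _ hu' _ hv']
      ring
  have hpol : ∀ z₁ ∈ 𝔷, ∀ z₂ ∈ 𝔷, ∀ u' ∈ V, ∀ v' ∈ V,
      ⟪J z₁ u', J z₂ v'⟫ + ⟪J z₂ u', J z₁ v'⟫ = 2 * ⟪z₁, z₂⟫ * ⟪u', v'⟫ := by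
    intro z₁ hz₁ z₂ hz₂ u' hu' v' hv'
    have hsum := hiso _ (𝔷.add_mem hz₁ hz₂) _ hu' _ hv'
    rw [hJadd _ hz₁ _ hz₂ _ hu', hJadd _ hz₁ _ hz₂ _ hv', inner_add_left, inner_add_right,
      inner_add_right, hiso _ hz₁ _ hu' _ hv', hiso _ hz₂ _ hu' _ hv'] at hsum
    have hnorm : ‖z₁ + z₂‖ ^ 2 = ‖z₁‖ ^ 2 + 2 * ⟪z₁, z₂⟫ + ‖z₂‖ ^ 2 := by
      rw [← real_inner_self_eq_norm_sq, ← real_inner_self_eq_norm_sq,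
        ← real_inner_self_eq_norm_sq, inner_add_left, inner_add_right, inner_add_right,
        real_inner_comm z₂ z₁]
      ring
    rw [hnorm] at hsum
    linarith [hsum]
  have hJaddu : ∀ z₁ ∈ 𝔷, ∀ a ∈ V, ∀ b ∈ V, J z₁ (a + b) = J z₁ a + J z₁ b := by
    intro z₁ hz₁ a ha b hb
    have hab : a + b ∈ V := Submodule.add_mem _ ha hb
    have h0 : ⟪J z₁ (a + b) - (J z₁ a + J z₁ b), J z₁ (a + b) - (J z₁ a + J z₁ b)⟫ = 0 := by
      simp only [inner_sub_left, inner_sub_right, inner_add_left, inner_add_right,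
        hiso _ hz₁ _ hab _ hab, hiso _ hz₁ _ hab _ ha, hiso _ hz₁ _ hab _ hb,
        hiso _ hz₁ _ ha _ hab, hiso _ hz₁ _ ha _ ha, hiso _ hz₁ _ ha _ hb,
        hiso _ hz₁ _ hb _ hab, hiso _ hz₁ _ hb _ ha, hiso _ hz₁ _ hb _ hb]
      ring_nf
    exact sub_eq_zero.mp (inner_self_eq_zero.mp h0)
  have hbrself : ∀ z₁ ∈ 𝔷, ∀ x ∈ V, ⟪J z₁ x, x⟫ = 0 := by
    intro z₁ hz₁ x hx
    rw [hJdef _ hz₁ _ hx _ hx, hlie0 x, inner_zero_right]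
  have hskew : ∀ z₁ ∈ 𝔷, ∀ x ∈ V, ∀ y ∈ V, ⟪J z₁ x, y⟫ = -⟪x, J z₁ y⟫ := by
    intro z₁ hz₁ x hx y hy
    have h := hbrself _ hz₁ _ (Submodule.add_mem V hx hy)
    rw [hJaddu _ hz₁ _ hx _ hy, inner_add_left, inner_add_right, inner_add_right,
      hbrself _ hz₁ _ hx, hbrself _ hz₁ _ hy] at h
    have hc := real_inner_comm x (J z₁ y)
    have hc2 := real_inner_comm y (J z₁ x)
    linarith [h]
  have hJiu : ∀ z₁ ∈ 𝔷, ∀ u' ∈ V,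
      J z₁ ((Complex.I : ℂ) • u') = -(J ((Complex.I : ℂ) • z₁) u') := by
    intro z₁ hz₁ u' hu'
    refine hext _ (hJmem _ hz₁ _ (hiV hu')) _
      (Submodule.neg_mem _ (hJmem _ (hiz hz₁) _ hu')) ?_
    intro v hv
    rw [hJdef _ hz₁ _ (hiV hu') _ hv, hbil, inner_neg_left,
      hJdef _ (hiz hz₁) _ hu' _ hv, hIleft, neg_neg]
  have hJiz : ∀ z₁ ∈ 𝔷, ∀ u' ∈ V,
      J ((Complex.I : ℂ) • z₁) u' = (Complex.I : ℂ) • J z₁ u' := by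
    intro z₁ hz₁ u' hu'
    refine hext _ (hJmem _ (hiz hz₁) _ hu') _ (hiV (hJmem _ hz₁ _ hu')) ?_
    intro v hv
    rw [hIleft, hskew _ hz₁ _ hu' _ (hiV hv), neg_neg, hJiu _ hz₁ _ hv,
      inner_neg_right, hskew _ (hiz hz₁) _ hu' _ hv]
  have hJiu' : ∀ z₁ ∈ 𝔷, ∀ u' ∈ V,
      J z₁ ((Complex.I : ℂ) • u') = -((Complex.I : ℂ) • J z₁ u') := by
    intro z₁ hz₁ u' hu'
    rw [hJiu _ hz₁ _ hu', hJiz _ hz₁ _ hu']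
  -- key anticommutation
  have key : ∀ w' ∈ 𝔷, ⟪z, w'⟫ = 0 → J z (J w' u) + J w' (J z u) = 0 := by
    intro w' hw' horth
    have hmem : J z (J w' u) + J w' (J z u) ∈ V :=
      Submodule.add_mem _ (hJmem _ hz _ (hJmem _ hw' _ hu)) (hJmem _ hw' _ (hJmem _ hz _ hu))
    refine hext _ hmem _ (Submodule.zero_mem _) ?_
    intro v hv
    rw [inner_add_left, inner_zero_left,
      hskew _ hz _ (hJmem _ hw' _ hu) _ hv, hskew _ hw' _ (hJmem _ hz _ hu) _ hv]
    have hp := hpol _ hz _ hw' _ hu _ hv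
    rw [horth] at hp
    linarith [hp]
  have hziw : ⟪z, (Complex.I : ℂ) • w⟫ = 0 := by
    have h := hIleft z w
    rw [hizw] at h
    linarith [h]
  have h3 := key _ (hiz hw) hziw
  rw [hJiz _ hw _ hu, hJiu' _ hz _ (hJmem _ hw _ hu), hJiz _ hw _ (hJmem _ hz _ hu)] at h3
  have hcomm : J w (J z u) = J z (J w u) := by
    have h4 : (Complex.I : ℂ) • J w (J z u) = (Complex.I : ℂ) • J z (J w u) :=
      sub_eq_zero.mp (by rw [sub_eq_neg_add]; exact h3)
    have h5 := congrArg (fun x => (Complex.I : ℂ) • x) h4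
    simp only [hII] at h5
    exact neg_injective h5
  have h6 := key _ hw hzw
  have hA : J z (J w u) = 0 := by
    have h7 : (2 : ℝ) • J z (J w u) = 0 := by
      rw [two_smul]
      nth_rewrite 2 [← hcomm]
      exact h6
    rcases smul_eq_zero.mp h7 with h | h
    · norm_num at h
    · exact h
  exact ⟨hA, by rw [hcomm, hA]⟩
end

section
/- Let $(\mathfrak{g}, \langle\cdot,\cdot\rangle)$ be a complex H-type Lie algebra that is not abelian (i.e., its center $\mathfrak{z}$ is a proper subspace of $\mathfrak{g}$). Then the center $\mathfrak{z}$ has complex dimension exactly 1. -/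
open scoped RealInnerProductSpace

attribute [local instance 2000] NormedAddCommGroup.toAddCommGroup

/-- The center of a non-abelian complex H-type Lie algebra has complex
dimension exactly 1. -/
theorem center_complex_dim_one_of_complex_Htype
    {G : Type*} [LieRing G]
    [NormedAddCommGroup G] [InnerProductSpace ℝ G]
    [Module ℂ G] [IsScalarTower ℝ ℂ G] [FiniteDimensional ℂ G]
    (hbil : ∀ (a : ℂ) (x y : G), ⁅a • x, y⁆ = a • ⁅x, y⁆)
    (hherm : ∀ x y : G, ⟪(Complex.I : ℂ) • x, (Complex.I : ℂ) • y⟫ = ⟪x, y⟫)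
    (𝔷 : Submodule ℂ G) (h𝔷 : ∀ x : G, x ∈ 𝔷 ↔ ∀ y : G, ⁅x, y⁆ = 0)
    (J : G → G → G)
    (hJmem : ∀ z ∈ 𝔷, ∀ u ∈ (𝔷.restrictScalars ℝ)ᗮ, J z u ∈ (𝔷.restrictScalars ℝ)ᗮ)
    (hJdef : ∀ z ∈ 𝔷, ∀ u ∈ (𝔷.restrictScalars ℝ)ᗮ, ∀ v ∈ (𝔷.restrictScalars ℝ)ᗮ,
      ⟪J z u, v⟫ = ⟪z, ⁅u, v⁆⟫)
    (h1 : ∀ u ∈ (𝔷.restrictScalars ℝ)ᗮ, ∀ v ∈ (𝔷.restrictScalars ℝ)ᗮ, ⁅u, v⁆ ∈ 𝔷)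
    (h2 : ∀ z ∈ 𝔷, ‖z‖ = 1 → ∀ u ∈ (𝔷.restrictScalars ℝ)ᗮ, ∀ v ∈ (𝔷.restrictScalars ℝ)ᗮ,
      ⟪J z u, J z v⟫ = ⟪u, v⟫)
    -- non-abelian: the center is a proper subspace of `G`
    (hproper : 𝔷 ≠ ⊤) :
    Module.finrank ℂ 𝔷 = 1 := by
  haveI : FiniteDimensional ℝ G := Module.Finite.trans ℂ G
  set V : Submodule ℝ G := (𝔷.restrictScalars ℝ)ᗮ with hVdef
  -- i ∘ i = -1
  have hII : ∀ x : G, (Complex.I : ℂ) • (Complex.I : ℂ) • x = -x := by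
    intro x; rw [smul_smul, Complex.I_mul_I, neg_one_smul]
  -- ⟪i x, y⟫ = -⟪x, i y⟫
  have hIi : ∀ x y : G, ⟪(Complex.I : ℂ) • x, y⟫ = -⟪x, (Complex.I : ℂ) • y⟫ := by
    intro x y
    have h := hherm ((Complex.I : ℂ) • x) y
    rw [hII, inner_neg_left] at h
    linarith
  -- i preserves V
  have hVi : ∀ v ∈ V, (Complex.I : ℂ) • v ∈ V := by
    intro v hv
    rw [hVdef, Submodule.mem_orthogonal] at hv ⊢
    intro x hx
    rw [Submodule.restrictScalars_mem] at hx
    have h := hv ((Complex.I : ℂ) • x) (by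
      rw [Submodule.restrictScalars_mem]; exact 𝔷.smul_mem _ hx)
    rw [hIi] at h
    linarith
  -- two elements of V with the same inner products against V agree
  have heqV : ∀ a ∈ V, ∀ b ∈ V, (∀ v ∈ V, ⟪a, v⟫ = ⟪b, v⟫) → a = b := by
    intro a ha b hb h
    have h1 := h (a - b) (sub_mem ha hb)
    have : ⟪a - b, a - b⟫ = 0 := by
      rw [inner_sub_left]; linarith
    have := inner_self_eq_zero.mp this
    exact sub_eq_zero.mp this
  -- the bracket of `x` with itself vanishes (in the normed additive structure)
  have hzero1 : ∀ y : G, ⁅(0 : G), y⁆ = 0 := by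
    intro y
    have h := hbil 0 0 y
    rw [zero_smul, zero_smul] at h
    exact h
  have h0lie : ∀ x : G, ⁅x, x⁆ = (0 : G) := by
    intro x
    have e1 : ⁅x, x⁆ = ⁅(0 : G), (0 : G)⁆ := by rw [lie_self, lie_self]
    rw [e1, hzero1]
  -- ⟪J z x, x⟫ = 0
  have hperp : ∀ z ∈ 𝔷, ∀ x ∈ V, ⟪J z x, x⟫ = 0 := by
    intro z hz x hx
    rw [hJdef _ hz x hx x hx, h0lie, inner_zero_right]
  -- J is additive in z
  have hJadd : ∀ z ∈ 𝔷, ∀ w ∈ 𝔷, ∀ u ∈ V, J (z + w) u = J z u + J w u := by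
    intro z hz w hw u hu
    refine heqV _ (hJmem _ (add_mem hz hw) u hu) _
      (add_mem (hJmem _ hz u hu) (hJmem _ hw u hu)) ?_
    intro v hv
    rw [hJdef _ (add_mem hz hw) u hu v hv, inner_add_left, inner_add_left,
      hJdef _ hz u hu v hv, hJdef _ hw u hu v hv]
  -- J is real-homogeneous in z
  have hJsmulR : ∀ (r : ℝ), ∀ z ∈ 𝔷, ∀ u ∈ V, J (r • z) u = r • J z u := by
    intro r z hz u hu
    have hrz : r • z ∈ 𝔷 := by
      have := (𝔷.restrictScalars ℝ).smul_mem r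
        ((Submodule.restrictScalars_mem ℝ 𝔷 z).mpr hz)
      rwa [Submodule.restrictScalars_mem] at this
    refine heqV _ (hJmem _ hrz u hu) _ (V.smul_mem r (hJmem _ hz u hu)) ?_
    intro v hv
    rw [hJdef _ hrz u hu v hv, real_inner_smul_left, real_inner_smul_left,
      hJdef _ hz u hu v hv]
  -- for unit z, J z is additive in u
  have hJaddU : ∀ z ∈ 𝔷, ‖z‖ = 1 → ∀ u ∈ V, ∀ v ∈ V,
      J z (u + v) = J z u + J z v := by
    intro z hz hz1 u hu v hv
    have e := h2 z hz hz1
    have g1 := e _ (add_mem hu hv) _ (add_mem hu hv)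
    have g2 := e _ (add_mem hu hv) u hu
    have g3 := e _ (add_mem hu hv) v hv
    have g4 := e u hu _ (add_mem hu hv)
    have g5 := e v hv _ (add_mem hu hv)
    have g6 := e u hu u hu
    have g7 := e u hu v hv
    have g8 := e v hv u hu
    have g9 := e v hv v hv
    have hDD : ⟪J z (u + v) - (J z u + J z v), J z (u + v) - (J z u + J z v)⟫ = 0 := by
      simp only [inner_sub_left, inner_sub_right, inner_add_left, inner_add_right]
        at g1 g2 g3 g4 g5 g6 g7 g8 g9 ⊢
      linarith
    exact sub_eq_zero.mp (inner_self_eq_zero.mp hDD)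
  -- for unit z, J z is skew-adjoint on V
  have hJskew : ∀ z ∈ 𝔷, ‖z‖ = 1 → ∀ u ∈ V, ∀ v ∈ V,
      ⟪J z u, v⟫ = -⟪J z v, u⟫ := by
    intro z hz hz1 u hu v hv
    have h0 := hperp z hz _ (add_mem hu hv)
    rw [hJaddU z hz hz1 u hu v hv, inner_add_left, inner_add_right, inner_add_right] at h0
    have p1 := hperp z hz u hu
    have p2 := hperp z hz v hv
    linarith
  -- norm of i z
  have hnormI : ∀ z : G, ‖(Complex.I : ℂ) • z‖ = ‖z‖ := by
    intro z
    rw [norm_eq_sqrt_real_inner, norm_eq_sqrt_real_inner, hherm]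
  -- J z (i u) = -(J (i z) u)
  have hA : ∀ z ∈ 𝔷, ∀ u ∈ V, J z ((Complex.I : ℂ) • u)
      = -(J ((Complex.I : ℂ) • z) u) := by
    intro z hz u hu
    refine heqV _ (hJmem _ hz _ (hVi u hu)) _
      (neg_mem (hJmem _ (𝔷.smul_mem _ hz) u hu)) ?_
    intro v hv
    rw [hJdef _ hz _ (hVi u hu) v hv, hbil, inner_neg_left,
      hJdef _ (𝔷.smul_mem _ hz) u hu v hv]
    linarith [hIi z ⁅u, v⁆]
  -- for unit z, J (i z) = i ∘ J z
  have hB : ∀ z ∈ 𝔷, ‖z‖ = 1 → ∀ u ∈ V,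
      J ((Complex.I : ℂ) • z) u = (Complex.I : ℂ) • J z u := by
    intro z hz hz1 u hu
    have hIz : (Complex.I : ℂ) • z ∈ 𝔷 := 𝔷.smul_mem _ hz
    have hIz1 : ‖(Complex.I : ℂ) • z‖ = 1 := by rw [hnormI, hz1]
    refine heqV _ (hJmem _ hIz u hu) _ (hVi _ (hJmem _ hz u hu)) ?_
    intro v hv
    have s1 : ⟪J ((Complex.I : ℂ) • z) u, v⟫ = -⟪J ((Complex.I : ℂ) • z) v, u⟫ :=
      hJskew _ hIz hIz1 u hu v hv
    have s2 : J z ((Complex.I : ℂ) • v) = -(J ((Complex.I : ℂ) • z) v) := hA z hz v hv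
    have s3 : ⟪J z ((Complex.I : ℂ) • v), u⟫ = -⟪J z u, (Complex.I : ℂ) • v⟫ :=
      hJskew _ hz hz1 _ (hVi v hv) u hu
    have s4 : ⟪(Complex.I : ℂ) • J z u, v⟫ = -⟪J z u, (Complex.I : ℂ) • v⟫ :=
      hIi (J z u) v
    rw [s2, inner_neg_left] at s3
    linarith
  -- for unit z, J z (i u) = -(i • J z u)
  have hJui : ∀ z ∈ 𝔷, ‖z‖ = 1 → ∀ u ∈ V,
      J z ((Complex.I : ℂ) • u) = -((Complex.I : ℂ) • J z u) := by
    intro z hz hz1 u hu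
    rw [hA z hz u hu, hB z hz hz1 u hu]
  -- the cross-term identity for orthonormal z w in 𝔷
  have hcross : ∀ z ∈ 𝔷, ∀ w ∈ 𝔷, ‖z‖ = 1 → ‖w‖ = 1 → ⟪z, w⟫ = 0 →
      ∀ u ∈ V, ∀ v ∈ V, ⟪J z u, J w v⟫ + ⟪J w u, J z v⟫ = 0 := by
    intro z hz w hw hz1 hw1 hzw u hu v hv
    have hzz : ⟪z, z⟫ = 1 := by rw [real_inner_self_eq_norm_sq, hz1]; norm_num
    have hww : ⟪w, w⟫ = 1 := by rw [real_inner_self_eq_norm_sq, hw1]; norm_num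
    set c : ℝ := (Real.sqrt 2)⁻¹ with hc
    have hsqrt2 : Real.sqrt 2 * Real.sqrt 2 = 2 := Real.mul_self_sqrt (by norm_num)
    have hcc : c * c = 1 / 2 := by
      rw [hc, ← mul_inv, hsqrt2]
      norm_num
    have hszw : z + w ∈ 𝔷 := add_mem hz hw
    have hs : c • (z + w) ∈ 𝔷 := by
      have := (𝔷.restrictScalars ℝ).smul_mem c
        ((Submodule.restrictScalars_mem ℝ 𝔷 (z + w)).mpr hszw)
      rwa [Submodule.restrictScalars_mem] at this
    have hsnorm : ‖c • (z + w)‖ = 1 := by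
      rw [norm_eq_sqrt_real_inner]
      have hwz : ⟪w, z⟫ = 0 := by rw [real_inner_comm]; exact hzw
      have : ⟪c • (z + w), c • (z + w)⟫ = 1 := by
        rw [real_inner_smul_left, real_inner_smul_right, inner_add_left,
          inner_add_right, inner_add_right, hzz, hww, hzw, hwz]
        nlinarith [hcc]
      rw [this, Real.sqrt_one]
    have hiso := h2 _ hs hsnorm u hu v hv
    have hJs : ∀ x, x ∈ V → J (c • (z + w)) x = c • (J z x + J w x) := by
      intro x hx
      rw [hJsmulR c _ hszw x hx, hJadd z hz w hw x hx]
    rw [hJs u hu, hJs v hv, real_inner_smul_left, real_inner_smul_right,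
      inner_add_left, inner_add_right, inner_add_right,
      h2 _ hz hz1 u hu v hv, h2 _ hw hw1 u hu v hv] at hiso
    have e : c * (c * (⟪u, v⟫ + ⟪J z u, J w v⟫ + (⟪J w u, J z v⟫ + ⟪u, v⟫)))
        = (c * c) * (2 * ⟪u, v⟫ + (⟪J z u, J w v⟫ + ⟪J w u, J z v⟫)) := by ring
    rw [e, hcc] at hiso
    linarith
  -- operator anticommutation
  have hanti : ∀ z ∈ 𝔷, ∀ w ∈ 𝔷, ‖z‖ = 1 → ‖w‖ = 1 → ⟪z, w⟫ = 0 →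
      ∀ u ∈ V, J w (J z u) = -(J z (J w u)) := by
    intro z hz w hw hz1 hw1 hzw u hu
    refine heqV _ (hJmem _ hw _ (hJmem _ hz u hu)) _
      (neg_mem (hJmem _ hz _ (hJmem _ hw u hu))) ?_
    intro v hv
    have e1 : ⟪J w (J z u), v⟫ = -⟪J z u, J w v⟫ := by
      rw [hJskew _ hw hw1 _ (hJmem _ hz u hu) v hv, real_inner_comm]
    have e2 : ⟪J z (J w u), v⟫ = -⟪J w u, J z v⟫ := by
      rw [hJskew _ hz hz1 _ (hJmem _ hw u hu) v hv, real_inner_comm]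
    have e3 := hcross z hz w hw hz1 hw1 hzw u hu v hv
    rw [inner_neg_left]
    linarith
  -- V is nontrivial
  have hVne : V ≠ ⊥ := by
    intro hbot
    apply hproper
    have htop : 𝔷.restrictScalars ℝ = ⊤ := Submodule.orthogonal_eq_bot_iff.mp hbot
    rw [Submodule.eq_top_iff']
    intro x
    have hx : x ∈ 𝔷.restrictScalars ℝ := htop ▸ Submodule.mem_top
    rwa [Submodule.restrictScalars_mem] at hx
  obtain ⟨u, hu, hu0⟩ := Submodule.exists_mem_ne_zero_of_ne_bot hVne
  -- 𝔷 is nontrivial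
  have hzne : 𝔷 ≠ ⊥ := by
    intro hbot
    apply hproper
    rw [Submodule.eq_top_iff']
    intro x
    rw [h𝔷]
    intro y
    have hxV : x ∈ V := by rw [hVdef, hbot]; simp
    have hyV : y ∈ V := by rw [hVdef, hbot]; simp
    have := h1 x hxV y hyV
    rw [hbot] at this
    simpa using this
  -- main contradiction for finrank ≥ 2
  have hle : Module.finrank ℂ 𝔷 ≤ 1 := by
    by_contra hge
    push_neg at hge
    -- obtain a unit central element z
    obtain ⟨z₀, hz₀, hz₀0⟩ := Submodule.exists_mem_ne_zero_of_ne_bot hzne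
    have hz₀n : ‖z₀‖ ≠ 0 := norm_ne_zero_iff.mpr hz₀0
    set z : G := ‖z₀‖⁻¹ • z₀ with hzdef
    have hz : z ∈ 𝔷 := by
      have := (𝔷.restrictScalars ℝ).smul_mem ‖z₀‖⁻¹
        ((Submodule.restrictScalars_mem ℝ 𝔷 z₀).mpr hz₀)
      rwa [Submodule.restrictScalars_mem] at this
    have hz1 : ‖z‖ = 1 := by
      rw [hzdef, norm_smul, norm_inv, norm_norm, inv_mul_cancel₀ hz₀n]
    have hzne0 : z ≠ 0 := by
      intro h; rw [h, norm_zero] at hz1; norm_num at hz1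
    -- obtain w orthogonal to the complex line of z
    set K : Submodule ℝ G := (Submodule.span ℂ {z}).restrictScalars ℝ with hKdef
    have hKfin : Module.finrank ℝ K = 2 := by
      rw [hKdef]
      rw [show (2 : ℕ) = 2 * 1 by norm_num]
      rw [← finrank_span_singleton (K := ℂ) hzne0, ← Complex.finrank_real_complex]
      exact (Module.finrank_mul_finrank ℝ ℂ (Submodule.span ℂ {z})).symm
    have hzfin : Module.finrank ℝ (𝔷.restrictScalars ℝ) = 2 * Module.finrank ℂ 𝔷 := by
      rw [← Complex.finrank_real_complex]
      exact (Module.finrank_mul_finrank ℝ ℂ 𝔷).symm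
    have hKorth : Module.finrank ℝ K + Module.finrank ℝ Kᗮ = Module.finrank ℝ G :=
      Submodule.finrank_add_finrank_orthogonal K
    have hsupinf := Submodule.finrank_sup_add_finrank_inf_eq (𝔷.restrictScalars ℝ) Kᗮ
    have hsup : Module.finrank ℝ ((𝔷.restrictScalars ℝ) ⊔ Kᗮ : Submodule ℝ G)
        ≤ Module.finrank ℝ G := Submodule.finrank_le _
    have hWpos : 0 < Module.finrank ℝ ((𝔷.restrictScalars ℝ) ⊓ Kᗮ : Submodule ℝ G) := by
      omega
    have hWne : ((𝔷.restrictScalars ℝ) ⊓ Kᗮ : Submodule ℝ G) ≠ ⊥ := by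
      intro h
      rw [h, finrank_bot] at hWpos
      exact lt_irrefl 0 hWpos
    obtain ⟨w₀, hw₀, hw₀0⟩ := Submodule.exists_mem_ne_zero_of_ne_bot hWne
    have hw₀z : w₀ ∈ 𝔷 := by
      have h' := (Submodule.mem_inf.mp hw₀).1
      rwa [Submodule.restrictScalars_mem] at h'
    have hw₀K : w₀ ∈ Kᗮ := (Submodule.mem_inf.mp hw₀).2
    have hw₀n : ‖w₀‖ ≠ 0 := norm_ne_zero_iff.mpr hw₀0
    set w : G := ‖w₀‖⁻¹ • w₀ with hwdef
    have hw : w ∈ 𝔷 := by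
      have := (𝔷.restrictScalars ℝ).smul_mem ‖w₀‖⁻¹
        ((Submodule.restrictScalars_mem ℝ 𝔷 w₀).mpr hw₀z)
      rwa [Submodule.restrictScalars_mem] at this
    have hw1 : ‖w‖ = 1 := by
      rw [hwdef, norm_smul, norm_inv, norm_norm, inv_mul_cancel₀ hw₀n]
    have hzK : z ∈ K := by
      rw [hKdef, Submodule.restrictScalars_mem]
      exact Submodule.subset_span rfl
    have hIzK : (Complex.I : ℂ) • z ∈ K := by
      rw [hKdef, Submodule.restrictScalars_mem]
      exact Submodule.smul_mem _ _ (Submodule.subset_span rfl)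
    have hzw : ⟪z, w⟫ = 0 := by
      rw [hwdef, real_inner_smul_right, hw₀K z hzK, mul_zero]
    have hIzw : ⟪(Complex.I : ℂ) • z, w⟫ = 0 := by
      rw [hwdef, real_inner_smul_right, hw₀K _ hIzK, mul_zero]
    -- now derive the contradiction
    have hIz : (Complex.I : ℂ) • z ∈ 𝔷 := 𝔷.smul_mem _ hz
    have hIz1 : ‖(Complex.I : ℂ) • z‖ = 1 := by rw [hnormI, hz1]
    have hJwu : J w u ∈ V := hJmem _ hw u hu
    have hJzu : J z u ∈ V := hJmem _ hz u hu
    set a : G := J z (J w u) with hadef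
    have e1 : J w (J z u) = -a := hanti z hz w hw hz1 hw1 hzw u hu
    have e2 : J w (J ((Complex.I : ℂ) • z) u) = -(J ((Complex.I : ℂ) • z) (J w u)) :=
      hanti _ hIz w hw hIz1 hw1 hIzw u hu
    have e3 : J ((Complex.I : ℂ) • z) u = (Complex.I : ℂ) • J z u := hB z hz hz1 u hu
    have e4 : J w ((Complex.I : ℂ) • J z u) = -((Complex.I : ℂ) • J w (J z u)) :=
      hJui w hw hw1 _ hJzu
    have e5 : J ((Complex.I : ℂ) • z) (J w u) = (Complex.I : ℂ) • a := hB z hz hz1 _ hJwu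
    have key : (Complex.I : ℂ) • a = -((Complex.I : ℂ) • a) := by
      have := e2
      rw [e3, e4, e1, e5] at this
      rw [← this, smul_neg, neg_neg]
    have ha0 : a = 0 := by
      have h2a : (Complex.I : ℂ) • a = 0 := by
        have h' : (Complex.I : ℂ) • a + (Complex.I : ℂ) • a = 0 :=
          eq_neg_iff_add_eq_zero.mp key
        have h'' : (2 : ℝ) • ((Complex.I : ℂ) • a) = 0 := by
          rw [two_smul]; exact h'
        have := smul_eq_zero.mp h''
        rcases this with h | h
        · norm_num at h
        · exact h
      have h3 := hII a
      rw [h2a, smul_zero] at h3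
      exact neg_eq_zero.mp h3.symm
    have huu : ⟪u, u⟫ = 0 := by
      have s1 : ⟪a, a⟫ = ⟪J w u, J w u⟫ := h2 z hz hz1 _ hJwu _ hJwu
      have s2 : ⟪J w u, J w u⟫ = ⟪u, u⟫ := h2 w hw hw1 u hu u hu
      rw [ha0] at s1
      simp only [inner_zero_left] at s1
      linarith
    exact hu0 (inner_self_eq_zero.mp huu)
  have hne : Module.finrank ℂ 𝔷 ≠ 0 := by
    intro h0
    exact hzne (Submodule.finrank_eq_zero.mp h0)
  omega
end

section
/- Every non-abelian complex H-type Lie algebra has odd complex dimension: if $(\mathfrak{g}, \langle\cdot,\cdot\rangle)$ is a non-abelian complex H-type Lie algebra, then $\dim_{\mathbb{C}} \mathfrak{g} = 2n + 1$ for some integer $n \geq 1$. -/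
open scoped RealInnerProductSpace

attribute [local instance 1001] NormedAddCommGroup.toAddCommGroup

/-- Every non-abelian complex H-type Lie algebra has odd complex dimension
`2n + 1` with `n ≥ 1`. -/
theorem complex_Htype_odd_dimension
    {G : Type*} [LieRing G]
    [NormedAddCommGroup G] [InnerProductSpace ℝ G]
    [Module ℂ G] [IsScalarTower ℝ ℂ G] [FiniteDimensional ℂ G]
    (hbil : ∀ (a : ℂ) (x y : G), ⁅a • x, y⁆ = a • ⁅x, y⁆)
    (hherm : ∀ x y : G, ⟪(Complex.I : ℂ) • x, (Complex.I : ℂ) • y⟫ = ⟪x, y⟫)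
    (𝔷 : Submodule ℂ G) (h𝔷 : ∀ x : G, x ∈ 𝔷 ↔ ∀ y : G, ⁅x, y⁆ = 0)
    (J : G → G → G)
    (hJmem : ∀ z ∈ 𝔷, ∀ u ∈ (𝔷.restrictScalars ℝ)ᗮ, J z u ∈ (𝔷.restrictScalars ℝ)ᗮ)
    (hJdef : ∀ z ∈ 𝔷, ∀ u ∈ (𝔷.restrictScalars ℝ)ᗮ, ∀ v ∈ (𝔷.restrictScalars ℝ)ᗮ,
      ⟪J z u, v⟫ = ⟪z, ⁅u, v⁆⟫)
    (h1 : ∀ u ∈ (𝔷.restrictScalars ℝ)ᗮ, ∀ v ∈ (𝔷.restrictScalars ℝ)ᗮ, ⁅u, v⁆ ∈ 𝔷)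
    (h2 : ∀ z ∈ 𝔷, ‖z‖ = 1 → ∀ u ∈ (𝔷.restrictScalars ℝ)ᗮ, ∀ v ∈ (𝔷.restrictScalars ℝ)ᗮ,
      ⟪J z u, J z v⟫ = ⟪u, v⟫)
    (hnonab : ∃ x y : G, ⁅x, y⁆ ≠ 0) :
    ∃ n : ℕ, 1 ≤ n ∧ Module.finrank ℂ G = 2 * n + 1 := by
  classical
  haveI : FiniteDimensional ℝ G := Module.Finite.trans ℂ G
  set V : Submodule ℝ G := (𝔷.restrictScalars ℝ)ᗮ with hVdef
  -- basic complex structure facts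
  have hII : ∀ x : G, (Complex.I : ℂ) • (Complex.I : ℂ) • x = -x := by
    intro x; rw [smul_smul, Complex.I_mul_I, neg_one_smul]
  have hskewI : ∀ x y : G, ⟪(Complex.I : ℂ) • x, y⟫ = -⟪x, (Complex.I : ℂ) • y⟫ := by
    intro x y
    have h := hherm ((Complex.I : ℂ) • x) y
    rw [hII] at h
    rw [← h, inner_neg_left]
  have hskewI' : ∀ x y : G, ⟪x, (Complex.I : ℂ) • y⟫ = -⟪(Complex.I : ℂ) • x, y⟫ := by
    intro x y; rw [hskewI]; ring
  have hIx : ∀ x : G, ⟪(Complex.I : ℂ) • x, x⟫ = 0 := by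
    intro x
    have h := hskewI x x
    have h2 := real_inner_comm x ((Complex.I : ℂ) • x)
    linarith
  have hnormI : ∀ x : G, ‖(Complex.I : ℂ) • x‖ = ‖x‖ := by
    intro x; rw [norm_eq_sqrt_real_inner, norm_eq_sqrt_real_inner x, hherm]
  have hsmul_decomp : ∀ (a : ℂ) (x : G),
      a • x = a.re • x + a.im • ((Complex.I : ℂ) • x) := by
    intro a x
    have h : a = (a.re : ℂ) + (a.im : ℂ) * Complex.I := (Complex.re_add_im a).symm
    calc a • x = ((a.re : ℂ) + (a.im : ℂ) * Complex.I) • x := by rw [← h]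
      _ = (a.re : ℂ) • x + ((a.im : ℂ) * Complex.I) • x := by rw [add_smul]
      _ = (a.re : ℂ) • x + (a.im : ℂ) • ((Complex.I : ℂ) • x) := by rw [mul_smul]
      _ = a.re • x + a.im • ((Complex.I : ℂ) • x) := by
          rw [← Complex.coe_algebraMap, algebraMap_smul, algebraMap_smul]
  have h𝔷smulR : ∀ (r : ℝ) (z : G), z ∈ 𝔷 → r • z ∈ 𝔷 := by
    intro r z hz
    rw [← algebraMap_smul ℂ r z]
    exact 𝔷.smul_mem _ hz
  have hVi : ∀ u ∈ V, (Complex.I : ℂ) • u ∈ V := by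
    intro u hu
    rw [Submodule.mem_orthogonal] at hu ⊢
    intro z hz
    have hz' : z ∈ 𝔷 := hz
    rw [hskewI' z u, hu _ (show (Complex.I : ℂ) • z ∈ 𝔷.restrictScalars ℝ from
      𝔷.smul_mem _ hz'), neg_zero]
  have hVc : ∀ (a : ℂ), ∀ u ∈ V, a • u ∈ V := by
    intro a u hu
    rw [hsmul_decomp]
    exact V.add_mem (V.smul_mem _ hu) (V.smul_mem _ (hVi u hu))
  -- the bracket vanishes at (0,·) and on the diagonal (w.r.t. the module zero)
  have hlie0 : ∀ y : G, ⁅(0 : G), y⁆ = 0 := by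
    intro y
    have h := hbil 0 0 y
    rwa [zero_smul, zero_smul] at h
  have halt : ∀ x : G, ⁅x, x⁆ = (0 : G) := by
    intro x
    calc ⁅x, x⁆ = ⁅(0 : G), (0 : G)⁆ := by rw [lie_self x, lie_self (0 : G)]
      _ = 0 := hlie0 0
  have hzlie : ∀ z ∈ 𝔷, ∀ y : G, ⁅z, y⁆ = 0 := fun z hz => (h𝔷 z).1 hz
  -- uniqueness helpers
  have heqV : ∀ w₁ ∈ V, ∀ w₂ ∈ V, (∀ v ∈ V, ⟪w₁, v⟫ = ⟪w₂, v⟫) → w₁ = w₂ := by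
    intro w₁ hw₁ w₂ hw₂ h
    have hs : w₁ - w₂ ∈ V := sub_mem hw₁ hw₂
    have h0 : ⟪w₁ - w₂, w₁ - w₂⟫ = 0 := by
      rw [inner_sub_left, h _ hs]; ring
    exact sub_eq_zero.mp (inner_self_eq_zero.mp h0)
  have heqZ : ∀ w₁ ∈ 𝔷, ∀ w₂ ∈ 𝔷, (∀ z ∈ 𝔷, ⟪z, w₁⟫ = ⟪z, w₂⟫) → w₁ = w₂ := by
    intro w₁ hw₁ w₂ hw₂ h
    have hs : w₁ - w₂ ∈ 𝔷 := 𝔷.sub_mem hw₁ hw₂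
    have h0 : ⟪w₁ - w₂, w₁ - w₂⟫ = 0 := by
      rw [inner_sub_right, h _ hs]; ring
    exact sub_eq_zero.mp (inner_self_eq_zero.mp h0)
  -- J is additive and ℝ-homogeneous in z
  have hJadd : ∀ z ∈ 𝔷, ∀ z' ∈ 𝔷, ∀ u ∈ V, J (z + z') u = J z u + J z' u := by
    intro z hz z' hz' u hu
    refine heqV _ (hJmem _ (𝔷.add_mem hz hz') _ hu) _
      (add_mem (hJmem _ hz _ hu) (hJmem _ hz' _ hu)) ?_
    intro v hv
    rw [hJdef _ (𝔷.add_mem hz hz') _ hu _ hv, inner_add_left, inner_add_left,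
      hJdef _ hz _ hu _ hv, hJdef _ hz' _ hu _ hv]
  have hJsmulR : ∀ (r : ℝ), ∀ z ∈ 𝔷, ∀ u ∈ V, J (r • z) u = r • J z u := by
    intro r z hz u hu
    refine heqV _ (hJmem _ (h𝔷smulR r z hz) _ hu) _ (V.smul_mem r (hJmem _ hz _ hu)) ?_
    intro v hv
    rw [hJdef _ (h𝔷smulR r z hz) _ hu _ hv, real_inner_smul_left, real_inner_smul_left,
      hJdef _ hz _ hu _ hv]
  -- J z is additive in u when ‖z‖ = 1 (it preserves inner products)
  have hJaddu : ∀ z ∈ 𝔷, ‖z‖ = 1 → ∀ u ∈ V, ∀ u' ∈ V,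
      J z (u + u') = J z u + J z u' := by
    intro z hz hz1 u hu u' hu'
    have key : ∀ a ∈ V, ∀ b ∈ V, ⟪J z a, J z b⟫ = ⟪a, b⟫ := h2 z hz hz1
    have huu' : u + u' ∈ V := add_mem hu hu'
    set w : G := J z (u + u') - (J z u + J z u') with hw
    have hwV : w ∈ V := sub_mem (hJmem _ hz _ huu')
      (add_mem (hJmem _ hz _ hu) (hJmem _ hz _ hu'))
    have h0 : ⟪w, w⟫ = 0 := by
      have e1 := key _ huu' _ huu'
      have e2 := key _ huu' _ hu
      have e3 := key _ huu' _ hu'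
      have e4 := key _ hu _ huu'
      have e5 := key _ hu _ hu
      have e6 := key _ hu _ hu'
      have e7 := key _ hu' _ huu'
      have e8 := key _ hu' _ hu
      have e9 := key _ hu' _ hu'
      simp only [hw, inner_sub_left, inner_sub_right, inner_add_left, inner_add_right] at *
      linarith [real_inner_comm u u']
    have := sub_eq_zero.mp (inner_self_eq_zero.mp h0)
    exact this
  -- bracket is biadditive on V × V (w.r.t. the module addition)
  have hBadd2 : ∀ u ∈ V, ∀ v ∈ V, ∀ v' ∈ V, ⁅u, v + v'⁆ = ⁅u, v⁆ + ⁅u, v'⁆ := by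
    intro u hu v hv v' hv'
    refine heqZ _ (h1 _ hu _ (add_mem hv hv')) _ (𝔷.add_mem (h1 _ hu _ hv) (h1 _ hu _ hv')) ?_
    intro z hz
    rw [← hJdef _ hz _ hu _ (add_mem hv hv'), inner_add_right, inner_add_right,
      hJdef _ hz _ hu _ hv, hJdef _ hz _ hu _ hv']
  have hBadd1 : ∀ u ∈ V, ∀ u' ∈ V, ∀ v ∈ V, ⁅u + u', v⁆ = ⁅u, v⁆ + ⁅u', v⁆ := by
    intro u hu u' hu' v hv
    refine heqZ _ (h1 _ (add_mem hu hu') _ hv) _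
      (𝔷.add_mem (h1 _ hu _ hv) (h1 _ hu' _ hv)) ?_
    intro z hz
    rcases eq_or_ne z 0 with rfl | hz0
    · simp
    · have hzu : ‖z‖⁻¹ • z ∈ 𝔷 := h𝔷smulR _ _ hz
      have hzu1 : ‖‖z‖⁻¹ • z‖ = 1 := by
        rw [norm_smul, Real.norm_eq_abs, abs_inv, abs_of_nonneg (norm_nonneg z),
          inv_mul_cancel₀ (norm_ne_zero_iff.mpr hz0)]
      have hscale : ∀ w : G, ⟪z, w⟫ = ‖z‖ * ⟪‖z‖⁻¹ • z, w⟫ := by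
        intro w
        rw [real_inner_smul_left, ← mul_assoc,
          mul_inv_cancel₀ (norm_ne_zero_iff.mpr hz0), one_mul]
      have hunit : ⟪‖z‖⁻¹ • z, ⁅u + u', v⁆⟫
          = ⟪‖z‖⁻¹ • z, ⁅u, v⁆⟫ + ⟪‖z‖⁻¹ • z, ⁅u', v⁆⟫ := by
        rw [← hJdef _ hzu _ (add_mem hu hu') _ hv, ← hJdef _ hzu _ hu _ hv,
          ← hJdef _ hzu _ hu' _ hv, hJaddu _ hzu hzu1 u hu u' hu', inner_add_left]
      rw [hscale, hscale, inner_add_right, hunit]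
  have hskewB : ∀ u ∈ V, ∀ v ∈ V, ⁅u, v⁆ = -⁅v, u⁆ := by
    intro u hu v hv
    have h := halt (u + v)
    rw [hBadd1 u hu v hv _ (add_mem hu hv), hBadd2 u hu u hu v hv,
      hBadd2 v hv u hu v hv] at h
    rw [halt u, halt v, zero_add, add_zero] at h
    exact eq_neg_of_add_eq_zero_left h
  -- bracket is ℂ-homogeneous in the second argument on V × V
  have hbil2V : ∀ u ∈ V, ∀ v ∈ V, ⁅u, (Complex.I : ℂ) • v⁆ = (Complex.I : ℂ) • ⁅u, v⁆ := by
    intro u hu v hv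
    rw [hskewB u hu _ (hVi _ hv), hbil, hskewB v hv u hu, smul_neg, neg_neg]
  -- J is skew
  have hJskew : ∀ z ∈ 𝔷, ∀ u ∈ V, ∀ v ∈ V, ⟪J z u, v⟫ = -⟪J z v, u⟫ := by
    intro z hz u hu v hv
    rw [hJdef _ hz _ hu _ hv, hJdef _ hz _ hv _ hu, hskewB u hu v hv, inner_neg_right]
  have hJI : ∀ z ∈ 𝔷, ∀ u ∈ V, J ((Complex.I : ℂ) • z) u = (Complex.I : ℂ) • J z u := by
    intro z hz u hu
    refine heqV _ (hJmem _ (𝔷.smul_mem _ hz) _ hu) _ (hVi _ (hJmem _ hz _ hu)) ?_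
    intro v hv
    rw [hJdef _ (𝔷.smul_mem _ hz) _ hu _ hv, hskewI z ⁅u, v⁆, hskewI (J z u) v,
      hJdef _ hz _ hu _ (hVi _ hv), hbil2V u hu v hv]
  have hJiu : ∀ z ∈ 𝔷, ∀ u ∈ V,
      J z ((Complex.I : ℂ) • u) = -((Complex.I : ℂ) • J z u) := by
    intro z hz u hu
    refine heqV _ (hJmem _ hz _ (hVi _ hu)) _ (neg_mem (hVi _ (hJmem _ hz _ hu))) ?_
    intro v hv
    rw [hJdef _ hz _ (hVi _ hu) _ hv, hbil, hskewI' z ⁅u, v⁆,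
      ← hJdef _ (𝔷.smul_mem _ hz) _ hu _ hv, hJI z hz u hu, inner_neg_left]
  -- polarized isometry: cross terms
  have hcross : ∀ z ∈ 𝔷, ∀ z' ∈ 𝔷, ‖z‖ = 1 → ‖z'‖ = 1 → ⟪z, z'⟫ = 0 →
      ∀ u ∈ V, ∀ v ∈ V, ⟪J z u, J z' v⟫ + ⟪J z' u, J z v⟫ = 0 := by
    intro z hz z' hz' hz1 hz'1 hzz' u hu v hv
    have hA := h2 z hz hz1 u hu v hv
    have hB := h2 z' hz' hz'1 u hu v hv
    have hsqrt2 : Real.sqrt 2 * Real.sqrt 2 = 2 := Real.mul_self_sqrt (by norm_num)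
    have hsqrt2pos : (0:ℝ) < Real.sqrt 2 := Real.sqrt_pos.mpr (by norm_num)
    set r : ℝ := (Real.sqrt 2)⁻¹ with hrdef
    set s : G := r • (z + z') with hsdef
    have hs𝔷 : s ∈ 𝔷 := h𝔷smulR _ _ (𝔷.add_mem hz hz')
    have hnormzz : ‖z + z'‖ = Real.sqrt 2 := by
      have h := norm_add_sq_real z z'
      rw [hz1, hz'1, hzz'] at h
      norm_num at h
      rw [← Real.sqrt_sq (norm_nonneg (z + z')), h]
    have hs1 : ‖s‖ = 1 := by
      rw [hsdef, norm_smul, hnormzz, hrdef, Real.norm_eq_abs, abs_inv,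
        abs_of_nonneg (Real.sqrt_nonneg 2), inv_mul_cancel₀ (ne_of_gt hsqrt2pos)]
    have hsu : J s u = r • J (z + z') u := hJsmulR r _ (𝔷.add_mem hz hz') _ hu
    have hsv : J s v = r • J (z + z') v := hJsmulR r _ (𝔷.add_mem hz hz') _ hv
    have h2s := h2 s hs𝔷 hs1 u hu v hv
    rw [hsu, hsv, real_inner_smul_left, real_inner_smul_right, ← mul_assoc] at h2s
    have hrr : r * r = (2:ℝ)⁻¹ := by
      rw [hrdef, ← mul_inv, hsqrt2]
    rw [hrr] at h2s
    have hT : ⟪J (z + z') u, J (z + z') v⟫ = 2 * ⟪u, v⟫ := by linarith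
    rw [hJadd z hz z' hz' u hu, hJadd z hz z' hz' v hv] at hT
    simp only [inner_add_left, inner_add_right] at hT
    linarith
  -- V and 𝔷 are nontrivial
  have hVne : V ≠ ⊥ := by
    intro h
    have h𝔷top : (𝔷.restrictScalars ℝ) = ⊤ := Submodule.orthogonal_eq_bot_iff.mp h
    obtain ⟨x, y, hxy⟩ := hnonab
    have hx : x ∈ 𝔷 := by
      have : x ∈ 𝔷.restrictScalars ℝ := h𝔷top ▸ Submodule.mem_top
      exact this
    exact hxy (hzlie x hx y)
  obtain ⟨u0, hu0V, hu0ne⟩ := (Submodule.ne_bot_iff V).mp hVne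
  have h𝔷ne : 𝔷 ≠ ⊥ := by
    intro h
    obtain ⟨x, y, hxy⟩ := hnonab
    have hVtop : V = ⊤ := by
      rw [hVdef, h]
      simp
    have hb := h1 x (by rw [hVtop]; trivial) y (by rw [hVtop]; trivial)
    rw [h] at hb
    exact hxy (by simpa using hb)
  obtain ⟨c, hc𝔷, hcne⟩ := (Submodule.ne_bot_iff 𝔷).mp h𝔷ne
  set z₀ : G := ‖c‖⁻¹ • c with hz₀def
  have hz₀𝔷 : z₀ ∈ 𝔷 := h𝔷smulR _ _ hc𝔷
  have hz₀1 : ‖z₀‖ = 1 := by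
    rw [hz₀def, norm_smul, Real.norm_eq_abs, abs_inv, abs_of_nonneg (norm_nonneg c),
      inv_mul_cancel₀ (norm_ne_zero_iff.mpr hcne)]
  -- key contradiction: no complex-orthonormal pair in the center
  have hpair : ∀ z ∈ 𝔷, ∀ z' ∈ 𝔷, ‖z‖ = 1 → ‖z'‖ = 1 → ⟪z, z'⟫ = 0 →
      ⟪(Complex.I : ℂ) • z, z'⟫ = 0 → False := by
    intro z hz z' hz' hn1 hn1' ho1 ho2
    have hIz' : (Complex.I : ℂ) • z' ∈ 𝔷 := 𝔷.smul_mem _ hz'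
    have ho3 : ⟪z, (Complex.I : ℂ) • z'⟫ = 0 := by
      rw [hskewI' z z', ho2, neg_zero]
    have hC1 : ∀ u ∈ V, ∀ v ∈ V, ⟪J z u, J z' v⟫ + ⟪J z' u, J z v⟫ = 0 :=
      fun u hu v hv => hcross z hz z' hz' hn1 hn1' ho1 u hu v hv
    have hC2 : ∀ u ∈ V, ∀ v ∈ V,
        ⟪J z u, J ((Complex.I : ℂ) • z') v⟫ + ⟪J ((Complex.I : ℂ) • z') u, J z v⟫ = 0 := by
      intro u hu v hv
      exact hcross z hz _ hIz' hn1 (by rw [hnormI, hn1']) ho3 u hu v hv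
    have hzero : ∀ u ∈ V, ∀ v ∈ V, ⟪J z' u, J z v⟫ = 0 := by
      intro u hu v hv
      have hiu : (Complex.I : ℂ) • u ∈ V := hVi _ hu
      have e2 := hC2 ((Complex.I : ℂ) • u) hiu v hv
      rw [hJI z' hz' v hv, hJI z' hz' _ hiu, hJiu z' hz' u hu, hJiu z hz u hu,
        smul_neg, hII, neg_neg, inner_neg_left, hherm] at e2
      have e1 := hC1 u hu v hv
      linarith
    have hq : J z' u0 ≠ 0 := by
      intro h
      have h' := h2 z' hz' hn1' u0 hu0V u0 hu0V
      rw [h] at h'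
      simp only [inner_zero_left] at h'
      exact hu0ne (inner_self_eq_zero.mp h'.symm)
    have hqV : J z' u0 ∈ V := hJmem _ hz' _ hu0V
    have hz3 : ∀ v ∈ V, ⟪J z (J z' u0), v⟫ = 0 := by
      intro v hv
      rw [hJskew z hz _ hqV _ hv, real_inner_comm, hzero u0 hu0V v hv]
      ring
    have hJq0 : J z (J z' u0) = 0 :=
      inner_self_eq_zero.mp (hz3 (J z (J z' u0)) (hJmem _ hz _ hqV))
    have h' := h2 z hz hn1 (J z' u0) hqV (J z' u0) hqV
    rw [hJq0] at h'
    simp only [inner_zero_left] at h'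
    exact hq (inner_self_eq_zero.mp h'.symm)
  -- the center is one-dimensional
  have hfr𝔷 : Module.finrank ℂ 𝔷 = 1 := by
    have hpos : 0 < Module.finrank ℂ 𝔷 := by
      rcases Nat.eq_zero_or_pos (Module.finrank ℂ 𝔷) with h | h
      · exact absurd (Submodule.finrank_eq_zero.mp h) h𝔷ne
      · exact h
    have hlt : Module.finrank ℂ 𝔷 < 2 := by
      by_contra hge
      push_neg at hge
      have hz₀ne : z₀ ≠ 0 := by
        intro h; rw [h, norm_zero] at hz₀1; norm_num at hz₀1
      have hex : ∃ w ∈ 𝔷, w ∉ Submodule.span ℂ {z₀} := by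
        by_contra hall
        push_neg at hall
        have hle : 𝔷 ≤ Submodule.span ℂ {z₀} := fun w hw => hall w hw
        have hmono := Submodule.finrank_mono hle
        rw [finrank_span_singleton hz₀ne] at hmono
        omega
      obtain ⟨w, hw𝔷, hwspan⟩ := hex
      set w' : G := w - ⟪z₀, w⟫ • z₀ - ⟪(Complex.I : ℂ) • z₀, w⟫ • ((Complex.I : ℂ) • z₀)
        with hw'def
      have hw'𝔷 : w' ∈ 𝔷 := 𝔷.sub_mem (𝔷.sub_mem hw𝔷 (h𝔷smulR _ _ hz₀𝔷))
        (h𝔷smulR _ _ (𝔷.smul_mem _ hz₀𝔷))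
      have hz₀z₀ : ⟪z₀, z₀⟫ = 1 := by
        rw [real_inner_self_eq_norm_sq, hz₀1]; norm_num
      have hz₀Iz₀ : ⟪z₀, (Complex.I : ℂ) • z₀⟫ = 0 := by
        rw [real_inner_comm]; exact hIx z₀
      have hIz₀z₀ : ⟪(Complex.I : ℂ) • z₀, z₀⟫ = 0 := hIx z₀
      have hIz₀Iz₀ : ⟪(Complex.I : ℂ) • z₀, (Complex.I : ℂ) • z₀⟫ = 1 := by
        rw [hherm]; exact hz₀z₀
      have ho1 : ⟪z₀, w'⟫ = 0 := by
        simp only [hw'def, inner_sub_right, real_inner_smul_right, hz₀z₀, hz₀Iz₀]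
        ring
      have ho2 : ⟪(Complex.I : ℂ) • z₀, w'⟫ = 0 := by
        simp only [hw'def, inner_sub_right, real_inner_smul_right, hIz₀Iz₀, hIz₀z₀]
        ring
      have hw'ne : w' ≠ 0 := by
        intro h
        apply hwspan
        rw [Submodule.mem_span_singleton]
        refine ⟨((⟪z₀, w⟫ : ℝ) : ℂ) + ((⟪(Complex.I : ℂ) • z₀, w⟫ : ℝ) : ℂ) * Complex.I, ?_⟩
        have hw : w = ⟪z₀, w⟫ • z₀ + ⟪(Complex.I : ℂ) • z₀, w⟫ • ((Complex.I : ℂ) • z₀) := by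
          rw [hw'def, sub_sub, sub_eq_zero] at h
          exact h
        rw [add_smul, mul_smul, ← Complex.coe_algebraMap, algebraMap_smul, algebraMap_smul,
          ← hw]
      have hw'norm : ‖w'‖ ≠ 0 := norm_ne_zero_iff.mpr hw'ne
      set z' : G := ‖w'‖⁻¹ • w' with hz'def
      have hz'𝔷 : z' ∈ 𝔷 := h𝔷smulR _ _ hw'𝔷
      have hz'1 : ‖z'‖ = 1 := by
        rw [hz'def, norm_smul, Real.norm_eq_abs, abs_inv, abs_of_nonneg (norm_nonneg w'),
          inv_mul_cancel₀ hw'norm]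
      refine hpair z₀ hz₀𝔷 z' hz'𝔷 hz₀1 hz'1 ?_ ?_
      · rw [hz'def, real_inner_smul_right, ho1, mul_zero]
      · rw [hz'def, real_inner_smul_right, ho2, mul_zero]
    omega
  -- V as a complex submodule
  let 𝕍 : Submodule ℂ G :=
    { carrier := (V : Set G)
      add_mem' := fun ha hb => V.add_mem ha hb
      zero_mem' := V.zero_mem
      smul_mem' := fun a {x} hx => hVc a x hx }
  have h𝕍mem : ∀ x : G, x ∈ 𝕍 ↔ x ∈ V := fun x => Iff.rfl
  have hsum : Module.finrank ℂ 𝔷 + Module.finrank ℂ 𝕍 = Module.finrank ℂ G := by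
    have hsup : 𝔷 ⊔ 𝕍 = ⊤ := by
      rw [Submodule.eq_top_iff']
      intro x
      obtain ⟨z, hz, u, hu, hx⟩ := (𝔷.restrictScalars ℝ).exists_add_mem_mem_orthogonal x
      rw [hx]
      exact Submodule.add_mem_sup (hz : z ∈ 𝔷) ((h𝕍mem u).mpr hu)
    have hinf : 𝔷 ⊓ 𝕍 = ⊥ := by
      rw [Submodule.eq_bot_iff]
      rintro x ⟨hx1, hx2⟩
      have hx2' : x ∈ V := hx2
      rw [Submodule.mem_orthogonal] at hx2'
      exact inner_self_eq_zero.mp (hx2' x (hx1 : x ∈ 𝔷.restrictScalars ℝ))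
    have hfr := Submodule.finrank_sup_add_finrank_inf_eq 𝔷 𝕍
    rw [hsup, hinf, finrank_top, finrank_bot, add_zero] at hfr
    exact hfr.symm
  -- the symplectic-type form on V
  set σ : G → G → ℂ := fun u v =>
    ((⟪J z₀ u, v⟫ : ℝ) : ℂ) + Complex.I * ((⟪(Complex.I : ℂ) • J z₀ u, v⟫ : ℝ) : ℂ) with hσdef
  have hσ_add : ∀ u v w : G, σ u (v + w) = σ u v + σ u w := by
    intro u v w
    simp only [hσdef, inner_add_right]
    push_cast; ring
  have hσ_smulR : ∀ (u : G) (r : ℝ) (v : G), σ u (r • v) = (r : ℂ) * σ u v := by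
    intro u r v
    simp only [hσdef, real_inner_smul_right]
    push_cast; ring
  have hσ_I : ∀ u v : G, σ u ((Complex.I : ℂ) • v) = Complex.I * σ u v := by
    intro u v
    simp only [hσdef]
    rw [hskewI' (J z₀ u) v, hherm (J z₀ u) v]
    push_cast
    linear_combination (-((⟪(Complex.I : ℂ) • J z₀ u, v⟫ : ℝ) : ℂ)) * Complex.I_sq
  have hσ_smul : ∀ (u : G) (a : ℂ) (v : G), σ u (a • v) = a * σ u v := by
    intro u a v
    rw [hsmul_decomp a v, hσ_add, hσ_smulR, hσ_smulR, hσ_I]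
    linear_combination (σ u v) * (Complex.re_add_im a)
  let Lσ : G → G →ₗ[ℂ] ℂ := fun u =>
    { toFun := σ u
      map_add' := hσ_add u
      map_smul' := fun a v => by simpa using hσ_smul u a v }
  have hσ_skew : ∀ u ∈ V, ∀ v ∈ V, σ u v = -σ v u := by
    intro u hu v hv
    have c1 : ⟪J z₀ u, v⟫ = -⟪J z₀ v, u⟫ := hJskew _ hz₀𝔷 _ hu _ hv
    have c2 : ⟪(Complex.I : ℂ) • J z₀ u, v⟫ = -⟪(Complex.I : ℂ) • J z₀ v, u⟫ := by
      rw [hskewI (J z₀ u) v, hJskew _ hz₀𝔷 _ hu _ (hVi _ hv), hJiu _ hz₀𝔷 _ hv,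
        inner_neg_left]
      ring
    simp only [hσdef]
    rw [c1, c2]
    push_cast; ring
  -- V has even complex dimension
  have heven : Even (Module.finrank ℂ 𝕍) := by
    rcases Nat.even_or_odd (Module.finrank ℂ 𝕍) with h | hodd
    · exact h
    exfalso
    set m := Module.finrank ℂ 𝕍 with hm
    let b := Module.finBasis ℂ 𝕍
    obtain ⟨M, hM⟩ : ∃ M : Matrix (Fin m) (Fin m) ℂ, ∀ i j, M i j = σ ((b i : G)) ((b j : G)) :=
      ⟨fun i j => σ ((b i : G)) ((b j : G)), fun i j => rfl⟩
    have hbV : ∀ i, ((b i : G)) ∈ V := fun i => (b i).2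
    have hMskew : Matrix.transpose M = -M := by
      ext i j
      rw [Matrix.transpose_apply, Matrix.neg_apply, hM, hM]
      exact hσ_skew _ (hbV j) _ (hbV i)
    have hdet : M.det = 0 := by
      have hdt : M.det = (-1) ^ m * M.det := by
        conv_lhs => rw [← Matrix.det_transpose, hMskew]
        rw [Matrix.det_neg, Fintype.card_fin]
      rw [hodd.neg_one_pow] at hdt
      linear_combination hdt / 2
    obtain ⟨cvec, hcvec, hMc⟩ := Matrix.exists_mulVec_eq_zero_iff.mpr hdet
    set vv : 𝕍 := ∑ j, cvec j • b j with hvv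
    have hvvne : vv ≠ 0 := by
      intro h
      apply hcvec
      funext j
      exact Fintype.linearIndependent_iff.mp b.linearIndependent cvec (by rw [← hvv, h]) j
    have hvvV : (vv : G) ∈ V := vv.2
    have hLcoe : ∀ (u : G) (w : 𝕍),
        ((Lσ u).comp (𝕍.subtype : 𝕍 →ₗ[ℂ] G)) w = σ u (w : G) := fun u w => rfl
    have hstep1 : ∀ i, σ ((b i : G)) (vv : G) = 0 := by
      intro i
      rw [← hLcoe, hvv, map_sum]
      have hterm : ∀ j, ((Lσ (b i : G)).comp 𝕍.subtype) (cvec j • b j) = M i j * cvec j := by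
        intro j
        rw [map_smul]
        simp only [smul_eq_mul]
        rw [show ((Lσ (b i : G)).comp 𝕍.subtype) (b j) = σ ((b i : G)) ((b j : G)) from rfl,
          ← hM]
        exact mul_comm _ _
      rw [Finset.sum_congr rfl fun j _ => hterm j]
      have hMci := congrFun hMc i
      simpa [Matrix.mulVec, dotProduct] using hMci
    have hstep2 : ∀ w : 𝕍, σ (vv : G) (w : G) = 0 := by
      intro w
      have hrep : (∑ i, b.repr w i • b i) = w := b.sum_repr w
      rw [← hLcoe, ← hrep, map_sum]
      refine Finset.sum_eq_zero fun i _ => ?_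
      rw [map_smul]
      have hv : ((Lσ (vv : G)).comp 𝕍.subtype) (b i) = σ (vv : G) ((b i : G)) := rfl
      rw [hv, hσ_skew _ hvvV _ (hbV i), hstep1 i]
      simp
    have hJvvV : J z₀ (vv : G) ∈ V := hJmem _ hz₀𝔷 _ hvvV
    have hval : σ (vv : G) (J z₀ (vv : G)) = ((⟪(vv : G), (vv : G)⟫ : ℝ) : ℂ) := by
      simp only [hσdef]
      rw [h2 _ hz₀𝔷 hz₀1 _ hvvV _ hvvV, hIx (J z₀ (vv : G))]
      push_cast; ring
    have hzero := hstep2 ⟨J z₀ (vv : G), hJvvV⟩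
    rw [show ((⟨J z₀ (vv : G), hJvvV⟩ : 𝕍) : G) = J z₀ (vv : G) from rfl, hval] at hzero
    have hvv0 : ⟪(vv : G), (vv : G)⟫ = 0 := by exact_mod_cast hzero
    have : (vv : G) = 0 := inner_self_eq_zero.mp hvv0
    exact hvvne (by exact_mod_cast this)
  obtain ⟨n, hn⟩ := heven
  have hpos𝕍 : 0 < Module.finrank ℂ 𝕍 := by
    rcases Nat.eq_zero_or_pos (Module.finrank ℂ 𝕍) with h | h
    · exfalso
      have hbot : 𝕍 = ⊥ := Submodule.finrank_eq_zero.mp h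
      rw [Submodule.eq_bot_iff] at hbot
      exact hu0ne (hbot u0 ((h𝕍mem u0).mpr hu0V))
    · exact h
  exact ⟨n, by omega, by omega⟩
end
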